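/- Let X and Y be independent exponential random variables with means Ω₁ > 0 and Ω₂ > 0, respectively, and let Z = X·Y. Then Z has probability density function f_Z(z) = (2/(Ω₁Ω₂))·K₀(2√(z/(Ω₁Ω₂))) for z > 0. -/

import Mathlib

open MeasureTheory ProbabilityTheory Real

/-- Modified Bessel function of the second kind of order zero (Macdonald function),
via its integral representation. -/
noncomputable def K0 (x : ℝ) : ℝ :=
  ∫ t in Set.Ioi (0 : ℝ), Real.exp (-x * Real.cosh t)

/-- Density of an exponential random variable with mean `Ω`. -/
noncomputable def expDens (Ω x : ℝ) : ℝ :=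
  if 0 ≤ x then 1 / Ω * Real.exp (-x / Ω) else 0

section Aux
open Set Filter
open scoped ENNReal

lemma lintegral_image_1d {s : Set ℝ} {f f' : ℝ → ℝ} (hs : MeasurableSet s)
    (hf' : ∀ x ∈ s, HasDerivWithinAt f (f' x) s x) (hf : Set.InjOn f s) (g : ℝ → ℝ≥0∞) :
    ∫⁻ x in f '' s, g x = ∫⁻ x in s, ENNReal.ofReal |f' x| * g (f x) := by
  simpa only [ContinuousLinearMap.det_toSpanSingleton] using
    lintegral_image_eq_lintegral_abs_det_fderiv_mul volume hs
      (fun x hx => (hf' x hx).hasFDerivWithinAt) hf g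

lemma measurable_expDens (Ω : ℝ) : Measurable (expDens Ω) := by
  unfold expDens
  apply Measurable.ite (measurableSet_le measurable_const measurable_id) <;> fun_prop

lemma expDens_neg {Ω x : ℝ} (hx : x < 0) : expDens Ω x = 0 := if_neg (not_le.mpr hx)

lemma t_le_cosh (t : ℝ) (ht : 0 ≤ t) : t ≤ Real.cosh t :=
  le_trans (Real.self_le_sinh_iff.mpr ht) (Real.sinh_lt_cosh t).le

lemma integrable_exp_neg_cosh {b : ℝ} (hb : 0 < b) :
    IntegrableOn (fun t => Real.exp (-b * Real.cosh t)) (Ioi (0:ℝ)) := by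
  have hmono : IntegrableOn (fun t => Real.exp (-b * t)) (Ioi (0:ℝ)) :=
    (exp_neg_integrableOn_Ioi 0 hb).congr_fun (fun t _ => by ring_nf) measurableSet_Ioi
  apply hmono.mono' (Continuous.aestronglyMeasurable (by continuity))
  filter_upwards [self_mem_ae_restrict measurableSet_Ioi] with t ht
  rw [norm_eq_abs, abs_of_pos (exp_pos _), exp_le_exp]
  nlinarith [t_le_cosh t ht.le]

lemma K0_ofReal {b : ℝ} (hb : 0 < b) :
    ENNReal.ofReal (K0 b)
      = ∫⁻ t in Ioi (0:ℝ), ENNReal.ofReal (Real.exp (-b * Real.cosh t)) :=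
  ofReal_integral_eq_lintegral_ofReal (integrable_exp_neg_cosh hb)
    (Filter.Eventually.of_forall fun _ => (exp_pos _).le)

noncomputable def dens1 (Ω₁ : ℝ) : ℝ → ℝ≥0∞ := fun x => ENNReal.ofReal (expDens Ω₁ x)

lemma measurable_dens1 (Ω₁ : ℝ) : Measurable (dens1 Ω₁) :=
  (measurable_expDens Ω₁).ennreal_ofReal

noncomputable def hFun (Ω₁ Ω₂ : ℝ) (z : ℝ) : ℝ≥0∞ :=
  ∫⁻ x in Ioi (0:ℝ), dens1 Ω₁ x * ENNReal.ofReal x⁻¹ * dens1 Ω₂ (z/x)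

lemma hFun_pos {Ω₁ Ω₂ z : ℝ} (h1 : 0 < Ω₁) (h2 : 0 < Ω₂) (hz : 0 < z) :
    hFun Ω₁ Ω₂ z = ENNReal.ofReal (2/(Ω₁*Ω₂) * K0 (2 * Real.sqrt (z/(Ω₁*Ω₂)))) := by
  unfold hFun dens1
  set a := Real.sqrt (z/(Ω₁*Ω₂)) with ha_def
  have ha : 0 < a := Real.sqrt_pos.mpr (div_pos hz (mul_pos h1 h2))
  have ha2 : a^2 = z/(Ω₁*Ω₂) := Real.sq_sqrt (div_pos hz (mul_pos h1 h2)).le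
  set c := a * Ω₁ with hc_def
  have hc : 0 < c := mul_pos ha h1
  have hzc : z = c * (a * Ω₂) := by
    rw [hc_def]
    have : a * Ω₁ * (a * Ω₂) = a^2 * (Ω₁ * Ω₂) := by ring
    rw [this, ha2]; field_simp
  have himg : (fun t => c * Real.exp t) '' univ = Ioi (0:ℝ) := by
    ext x
    simp only [image_univ, mem_range, mem_Ioi]
    constructor
    · rintro ⟨t, rfl⟩; positivity
    · intro hx; exact ⟨Real.log (x / c), by
        rw [Real.exp_log (div_pos hx hc)]; field_simp⟩
  have hderiv : ∀ t ∈ (univ : Set ℝ), HasDerivWithinAt (fun t => c * Real.exp t)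
      (c * Real.exp t) univ t :=
    fun t _ => ((Real.hasDerivAt_exp t).const_mul c).hasDerivWithinAt
  have hinj : Set.InjOn (fun t => c * Real.exp t) univ := fun s _ t _ h => by
    simpa [hc.ne', Real.exp_eq_exp] using h
  rw [← himg, lintegral_image_1d MeasurableSet.univ hderiv hinj]
  have hpt : ∀ t : ℝ, ENNReal.ofReal |c * Real.exp t| *
      (ENNReal.ofReal (expDens Ω₁ (c * Real.exp t)) * ENNReal.ofReal (c * Real.exp t)⁻¹ *
        ENNReal.ofReal (expDens Ω₂ (z / (c * Real.exp t))))
      = ENNReal.ofReal (1/(Ω₁*Ω₂) * Real.exp (-(2*a) * Real.cosh t)) := by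
    intro t
    have hce : 0 < c * Real.exp t := mul_pos hc (exp_pos t)
    rw [abs_of_pos hce, expDens, expDens, if_pos hce.le,
      if_pos (div_pos hz hce).le,
      ← ENNReal.ofReal_mul (by positivity), ← ENNReal.ofReal_mul (by positivity),
      ← ENNReal.ofReal_mul hce.le]
    congr 1
    have e1 : c * Real.exp t / Ω₁ = a * Real.exp t := by
      rw [hc_def]; field_simp
    have e2 : z / (c * Real.exp t) / Ω₂ = a * Real.exp (-t) := by
      rw [hzc, Real.exp_neg]; field_simp
    have e3 : -(2*a) * Real.cosh t = -(a * Real.exp t) + -(a * Real.exp (-t)) := by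
      rw [Real.cosh_eq]; ring
    rw [e3, Real.exp_add, ← e1, ← e2]
    field_simp
  simp_rw [hpt]
  have hsplit : ∫⁻ t, ENNReal.ofReal (1/(Ω₁*Ω₂) * Real.exp (-(2*a) * Real.cosh t))
      = 2 * ∫⁻ t in Ioi (0:ℝ), ENNReal.ofReal (1/(Ω₁*Ω₂) * Real.exp (-(2*a) * Real.cosh t)) := by
    rw [← lintegral_add_compl _ (measurableSet_Ioi (a := (0:ℝ))), compl_Ioi]
    have hIic : (volume.restrict (Iic (0:ℝ))) = volume.restrict (Iio (0:ℝ)) :=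
      Measure.restrict_congr_set Iio_ae_eq_Iic.symm
    have hneg : Neg.neg '' Ioi (0:ℝ) = Iio (0:ℝ) := by
      ext x; simp only [mem_image, mem_Ioi, mem_Iio]
      constructor
      · rintro ⟨t, ht, rfl⟩; linarith
      · intro hx; exact ⟨-x, by linarith, by ring⟩
    have hrefl : ∫⁻ t in Iio (0:ℝ), ENNReal.ofReal (1/(Ω₁*Ω₂) * Real.exp (-(2*a) * Real.cosh t))
        = ∫⁻ t in Ioi (0:ℝ), ENNReal.ofReal (1/(Ω₁*Ω₂) * Real.exp (-(2*a) * Real.cosh t)) := by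
      rw [← hneg, lintegral_image_1d measurableSet_Ioi
        (fun t _ => (hasDerivAt_neg t).hasDerivWithinAt) neg_injective.injOn _]
      simp [Real.cosh_neg]
    rw [hIic, hrefl]; ring
  rw [Measure.restrict_univ, hsplit]
  simp_rw [ENNReal.ofReal_mul (by positivity : (0:ℝ) ≤ 1/(Ω₁*Ω₂))]
  rw [lintegral_const_mul' _ _ ENNReal.ofReal_ne_top, ← K0_ofReal (by positivity : 0 < 2*a),
    ← ENNReal.ofReal_mul (by positivity : (0:ℝ) ≤ 1/(Ω₁*Ω₂)),
    show (2:ℝ≥0∞) = ENNReal.ofReal (2:ℝ) by simp,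
    ← ENNReal.ofReal_mul (by norm_num)]
  congr 1
  ring

lemma hFun_neg {Ω₁ Ω₂ z : ℝ} (hz : z < 0) : hFun Ω₁ Ω₂ z = 0 := by
  unfold hFun
  rw [setLIntegral_congr_fun measurableSet_Ioi (
    (fun ⦃x⦄ (hx : (0:ℝ) < x) => ?_)), lintegral_zero]
  rw [show dens1 Ω₂ (z/x) = 0 by
    simp [dens1, expDens_neg (div_neg_of_neg_of_pos hz hx)], mul_zero]

lemma hFun_ae (Ω₁ Ω₂ : ℝ) (h1 : 0 < Ω₁) (h2 : 0 < Ω₂) :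
    hFun Ω₁ Ω₂ =ᵐ[volume] fun z => ENNReal.ofReal
      (if 0 < z then 2 / (Ω₁ * Ω₂) * K0 (2 * Real.sqrt (z / (Ω₁ * Ω₂))) else 0) := by
  have h0 : ∀ᵐ z : ℝ, z ≠ 0 := by
    rw [ae_iff]
    have : {z : ℝ | ¬ z ≠ 0} = {0} := by ext z; simp
    rw [this]; exact Real.volume_singleton
  filter_upwards [h0] with z hz
  rcases lt_or_gt_of_ne hz with h | h
  · rw [hFun_neg h, if_neg (by linarith), ENNReal.ofReal_zero]
  · rw [hFun_pos h1 h2 h, if_pos h]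

theorem map_mul_prod {Ω₁ Ω₂ : ℝ} :
    Measure.map (fun p : ℝ × ℝ => p.1 * p.2)
      ((volume.withDensity (dens1 Ω₁)).prod (volume.withDensity (dens1 Ω₂)))
    = volume.withDensity (hFun Ω₁ Ω₂) := by
  have hmul : Measurable (fun p : ℝ × ℝ => p.1 * p.2) := measurable_fst.mul measurable_snd
  ext s hs
  rw [Measure.map_apply hmul hs, Measure.prod_apply (hmul hs),
    withDensity_apply _ hs]
  set μ₂ := volume.withDensity (dens1 Ω₂) with hμ₂
  have hmeas_slice : Measurable (fun x => μ₂ (Prod.mk x ⁻¹' ((fun p : ℝ × ℝ => p.1 * p.2) ⁻¹' s))) :=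
    measurable_measure_prodMk_left (hmul hs)
  rw [lintegral_withDensity_eq_lintegral_mul _ (measurable_dens1 Ω₁) hmeas_slice]
  have hsplit : ∀ F : ℝ → ℝ≥0∞, (∀ x < (0:ℝ), F x = 0) →
      ∫⁻ x, F x = ∫⁻ x in Ioi (0:ℝ), F x := by
    intro F hF
    rw [← lintegral_add_compl F (measurableSet_Ioi (a := (0:ℝ))), compl_Ioi,
      Measure.restrict_congr_set Iio_ae_eq_Iic.symm,
      setLIntegral_congr_fun measurableSet_Iio
        ((fun ⦃x⦄ hx => hF x hx)), lintegral_zero, add_zero]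
  rw [hsplit _ (fun x hx => by
    simp [Pi.mul_apply, dens1, expDens_neg hx])]
  have hstep : ∀ x ∈ Ioi (0:ℝ),
      (dens1 Ω₁ * fun x => μ₂ (Prod.mk x ⁻¹' ((fun p : ℝ × ℝ => p.1 * p.2) ⁻¹' s))) x
      = ∫⁻ z, s.indicator (fun _ => (1:ℝ≥0∞)) z * (dens1 Ω₁ x * ENNReal.ofReal x⁻¹ * dens1 Ω₂ (z/x)) := by
    intro x hx
    have hx' : (0:ℝ) < x := hx
    have hGmeas : Measurable (fun z => s.indicator (fun _ => (1:ℝ≥0∞)) z * dens1 Ω₂ (z/x)) :=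
      ((measurable_one.indicator hs)).mul ((measurable_dens1 Ω₂).comp (measurable_id.div_const x))
    have hpre : Prod.mk x ⁻¹' ((fun p : ℝ × ℝ => p.1 * p.2) ⁻¹' s) = (fun y => x * y) ⁻¹' s := rfl
    have hμval : μ₂ (Prod.mk x ⁻¹' ((fun p : ℝ × ℝ => p.1 * p.2) ⁻¹' s))
        = ∫⁻ y, s.indicator (fun _ => (1:ℝ≥0∞)) (x*y) * dens1 Ω₂ ((x*y)/x) := by
      rw [hpre, hμ₂, withDensity_apply _ (hs.preimage (measurable_const_mul x)),
        ← lintegral_indicator (hs.preimage (measurable_const_mul x))]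
      congr 1
      ext y
      by_cases hy : x * y ∈ s
      · simp [Set.indicator_of_mem, hy, Set.indicator_of_mem (show y ∈ (fun y => x*y) ⁻¹' s from hy),
          mul_div_cancel_left₀ _ hx'.ne']
      · simp [Set.indicator_of_notMem, hy, Set.indicator_of_notMem (show y ∉ (fun y => x*y) ⁻¹' s from hy)]
    have hscale : ∫⁻ y, s.indicator (fun _ => (1:ℝ≥0∞)) (x*y) * dens1 Ω₂ ((x*y)/x)
        = ENNReal.ofReal x⁻¹ * ∫⁻ z, s.indicator (fun _ => (1:ℝ≥0∞)) z * dens1 Ω₂ (z/x) := by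
      rw [← lintegral_map hGmeas (measurable_const_mul x), Real.map_volume_mul_left hx'.ne',
        lintegral_smul_measure, abs_of_pos (inv_pos.mpr hx'), smul_eq_mul]
    rw [Pi.mul_apply, hμval, hscale, ← mul_assoc,
      ← lintegral_const_mul' (dens1 Ω₁ x * ENNReal.ofReal x⁻¹) _
        (ENNReal.mul_ne_top ENNReal.ofReal_ne_top ENNReal.ofReal_ne_top)]
    congr 1; ext z; ring
  rw [setLIntegral_congr_fun measurableSet_Ioi (fun ⦃x⦄ hx => hstep x hx)]
  have hFmeas : Measurable (Function.uncurry fun x z =>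
      s.indicator (fun _ => (1:ℝ≥0∞)) z * (dens1 Ω₁ x * ENNReal.ofReal x⁻¹ * dens1 Ω₂ (z/x))) := by
    apply Measurable.mul
    · exact (measurable_one.indicator hs).comp measurable_snd
    · exact (((measurable_dens1 Ω₁).comp measurable_fst).mul
        ((measurable_fst.inv).ennreal_ofReal)).mul
        ((measurable_dens1 Ω₂).comp (measurable_snd.div measurable_fst))
  rw [lintegral_lintegral_swap hFmeas.aemeasurable]
  rw [← lintegral_indicator hs]
  congr 1
  ext z
  rw [lintegral_const_mul' _ _ (by
    by_cases hz : z ∈ s <;> simp [Set.indicator_apply, hz])]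
  by_cases hz : z ∈ s
  · simp [Set.indicator_of_mem hz, hFun]
  · simp [Set.indicator_of_notMem hz]

end Aux

/-- The product of two independent exponential random variables with means `Ω₁, Ω₂`
has density `z ↦ (2/(Ω₁Ω₂)) K₀(2√(z/(Ω₁Ω₂)))` on `z > 0`. -/
theorem product_exponential_density
    {Ω : Type*} [MeasureSpace Ω] [IsProbabilityMeasure (ℙ : Measure Ω)]
    (X Y : Ω → ℝ) (hX : Measurable X) (hY : Measurable Y)
    (Ω₁ Ω₂ : ℝ) (hΩ₁ : 0 < Ω₁) (hΩ₂ : 0 < Ω₂)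
    (hindep : IndepFun X Y ℙ)
    (hXlaw : Measure.map X ℙ =
      MeasureTheory.volume.withDensity (fun x => ENNReal.ofReal (expDens Ω₁ x)))
    (hYlaw : Measure.map Y ℙ =
      MeasureTheory.volume.withDensity (fun y => ENNReal.ofReal (expDens Ω₂ y))) :
    Measure.map (fun ω => X ω * Y ω) ℙ =
      MeasureTheory.volume.withDensity (fun z => ENNReal.ofReal
        (if 0 < z then 2 / (Ω₁ * Ω₂) * K0 (2 * Real.sqrt (z / (Ω₁ * Ω₂))) else 0)) := by
  have hmul : Measurable (fun p : ℝ × ℝ => p.1 * p.2) := measurable_fst.mul measurable_snd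
  have hprod : Measure.map (fun ω => (X ω, Y ω)) ℙ
      = (Measure.map X ℙ).prod (Measure.map Y ℙ) :=
    (indepFun_iff_map_prod_eq_prod_map_map hX.aemeasurable hY.aemeasurable).mp hindep
  have hcomp : Measure.map (fun ω => X ω * Y ω) ℙ
      = Measure.map (fun p : ℝ × ℝ => p.1 * p.2) (Measure.map (fun ω => (X ω, Y ω)) ℙ) := by
    rw [Measure.map_map hmul (hX.prodMk hY)]
    rfl
  rw [hcomp, hprod, hXlaw, hYlaw,
    show (fun x => ENNReal.ofReal (expDens Ω₁ x)) = dens1 Ω₁ from rfl,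
    show (fun y => ENNReal.ofReal (expDens Ω₂ y)) = dens1 Ω₂ from rfl,
    map_mul_prod, withDensity_congr_ae (hFun_ae Ω₁ Ω₂ hΩ₁ hΩ₂)]
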